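/- Let x,y ∈ {0,1}^n, let t ≤ √n be a positive integer, and let S ⊆ [0..n] with 0 ∈ S. For every directed path τ from (0,0) to (n,0) in the grid graph G_{x,y} that visits only vertices with diagonal in [−t..t], there exists a directed path τ_S from (0,0) to (n,0) in the sampled grid graph G_S whose total weight is at most the total weight of τ. Consequently, if Δ_e(x,y) ≤ t then opt(G_S) ≤ Δ_e(x,y). -/

import Mathlib

/-!
Statement 12.  Strings `x, y ∈ {0,1}^n` are modelled as functions `ℤ → Bool` on
positions `1..n`.  For every source-to-sink path in the grid graph `G_{x,y}` staying
within diagonals `[-t..t]` there is a source-to-sink path in the sampled grid graph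
`G_S` of at most the same weight; consequently, if `Δ_e(x,y) ≤ t` then
`opt(G_S) ≤ Δ_e(x,y)`.
-/

namespace Stmt12

/-- Total weight of a list of vertices regarded as a walk. -/
def pathCost {V : Type*} (wt : V → V → ℕ) : List V → ℕ
  | [] => 0
  | [_] => 0
  | a :: b :: l => wt a b + pathCost wt (b :: l)

/-- `l` is a directed path (walk) from `s` to `v` in the graph with edge relation `E`. -/
def IsPath {V : Type*} (E : V → V → Prop) (s v : V) (l : List V) : Prop :=
  l.head? = some s ∧ l.getLast? = some v ∧ l.Chain' E

/-- Shortest-path cost from `s` to `v`. -/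
noncomputable def cost {V : Type*} (E : V → V → Prop) (wt : V → V → ℕ) (s v : V) : ℕ :=
  sInf { c | ∃ l : List V, IsPath E s v l ∧ pathCost wt l = c }

/-- Costs for the edit operations (ported from Mathlib's former `Levenshtein.Cost`). -/
structure Levenshtein.Cost (α β δ : Type*) where
  delete : α → δ
  insert : β → δ
  substitute : α → β → δ

/-- Default costs: deletion, insertion 1; substitution 0 if equal, 1 otherwise
(ported from Mathlib's former `Levenshtein.defaultCost`). -/
def Levenshtein.defaultCost {α : Type*} [DecidableEq α] : Levenshtein.Cost α α ℕ where
  delete _ := 1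
  insert _ := 1
  substitute a b := if a = b then 0 else 1

/-- Weighted edit distance (same value as Mathlib's former `levenshtein`). -/
def levenshtein {α β δ : Type*} [Add δ] [Min δ] [Zero δ] (C : Levenshtein.Cost α β δ) :
    List α → List β → δ
  | [], [] => 0
  | x :: xs, [] => C.delete x + levenshtein C xs []
  | [], y :: ys => C.insert y + levenshtein C [] ys
  | x :: xs, y :: ys =>
    min (C.delete x + levenshtein C xs (y :: ys))
      (min (C.insert y + levenshtein C (x :: xs) ys) (C.substitute x y + levenshtein C xs ys))

lemma levenshtein_nil_cons {α β δ : Type*} [Add δ] [Min δ] [Zero δ] (C : Levenshtein.Cost α β δ)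
    (y : β) (ys : List β) :
    levenshtein C [] (y :: ys) = C.insert y + levenshtein C [] ys := by
  simp only [levenshtein]

lemma levenshtein_cons_nil {α β δ : Type*} [Add δ] [Min δ] [Zero δ] (C : Levenshtein.Cost α β δ)
    (x : α) (xs : List α) :
    levenshtein C (x :: xs) [] = C.delete x + levenshtein C xs [] := by
  simp only [levenshtein]

lemma levenshtein_cons_cons {α β δ : Type*} [Add δ] [Min δ] [Zero δ] (C : Levenshtein.Cost α β δ)
    (x : α) (xs : List α) (y : β) (ys : List β) :
    levenshtein C (x :: xs) (y :: ys) =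
      min (C.delete x + levenshtein C xs (y :: ys))
        (min (C.insert y + levenshtein C (x :: xs) ys) (C.substitute x y + levenshtein C xs ys)) := by
  simp only [levenshtein]

/-- The list `x_1 x_2 … x_n`. -/
def strList (n : ℕ) (x : ℤ → Bool) : List Bool :=
  (List.range n).map fun k => x ((k : ℤ) + 1)

/-- Edit (Levenshtein) distance `Δ_e(x,y)` between `x, y ∈ {0,1}^n`. -/
def editDist (n : ℕ) (x y : ℤ → Bool) : ℕ :=
  levenshtein Levenshtein.defaultCost (strList n x) (strList n y)

/-- `S` contains an element larger than `i`. -/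
def hasNext (S : Finset ℤ) (i : ℤ) : Prop := ∃ s ∈ S, i < s

instance (S : Finset ℤ) (i : ℤ) : Decidable (hasNext S i) :=
  inferInstanceAs (Decidable (∃ s ∈ S, i < s))

/-- The smallest element of `S` larger than `i` (junk value `0` if none). -/
def nxt (S : Finset ℤ) (i : ℤ) : ℤ := ((S.filter fun s => i < s).min).untopD 0

/-- Edges of the sampled grid graph `G_S` on vertices `(S × [-t..t]) ∪ {(n,0)}`:
from `(i_j, d)` with `i_j ∈ S` not the last row of `S`, a vertical edge to
`(i_{j+1}, d)`, an insertion edge to `(i_j, d+1)` (when `d+1 ≤ t`), and a deletion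
edge to `(i_{j+1}, d-1)` (when `-t ≤ d-1`); from the last row `(i_s, d)`, an edge
to the sink `(n, 0)`. -/
def sampEdge (n t : ℕ) (S : Finset ℤ) (u v : ℤ × ℤ) : Prop :=
  u.1 ∈ S ∧ -(t : ℤ) ≤ u.2 ∧ u.2 ≤ (t : ℤ) ∧
    ((hasNext S u.1 ∧
        (v = (nxt S u.1, u.2) ∨ (v = (u.1, u.2 + 1) ∧ u.2 + 1 ≤ (t : ℤ)) ∨
          (v = (nxt S u.1, u.2 - 1) ∧ -(t : ℤ) ≤ u.2 - 1))) ∨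
      (¬ hasNext S u.1 ∧ v = ((n : ℤ), 0)))

/-- Weights of the sampled grid graph: a vertical edge `(i_j, d) → (i_{j+1}, d)` has
weight `0` iff `1 ≤ i_j + 1 + d ≤ n` and `x_{i_j+1} = y_{i_j+1+d}`; insertion and
deletion edges have weight `1`; the final edges `(i_s, d) → (n, 0)` have weight `|d|`. -/
def sampWt (n t : ℕ) (x y : ℤ → Bool) (S : Finset ℤ) (u v : ℤ × ℤ) : ℕ :=
  if hasNext S u.1 then
    (if v = (u.1, u.2 + 1) then 1
     else if v = (nxt S u.1, u.2) then
       (if 1 ≤ u.1 + 1 + u.2 ∧ u.1 + 1 + u.2 ≤ (n : ℤ) ∧ x (u.1 + 1) = y (u.1 + 1 + u.2)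
        then 0 else 1)
     else 1)
  else u.2.natAbs

/-- `opt(G_S)`: minimum weight of a path from `(0,0)` to `(n,0)` in `G_S`. -/
noncomputable def opt (n t : ℕ) (x y : ℤ → Bool) (S : Finset ℤ) : ℕ :=
  cost (sampEdge n t S) (sampWt n t x y S) (0, 0) ((n : ℤ), 0)

/-- Vertices of the grid graph `G_{x,y}`: `[0..n] × [-n..n]`. -/
def gridVertex (n : ℕ) (v : ℤ × ℤ) : Prop :=
  0 ≤ v.1 ∧ v.1 ≤ (n : ℤ) ∧ -(n : ℤ) ≤ v.2 ∧ v.2 ≤ (n : ℤ)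

/-- Edges of the grid graph `G_{x,y}`: deletion edges `(i,d) → (i+1,d-1)`,
insertion edges `(i,d) → (i,d+1)`, and matching/substitution edges
`(i,d) → (i+1,d)` (the latter present when `1 ≤ i+1+d ≤ n`), all present only
when both endpoints are vertices. -/
def gridEdge (n : ℕ) (u v : ℤ × ℤ) : Prop :=
  gridVertex n u ∧ gridVertex n v ∧
    (v = (u.1 + 1, u.2 - 1) ∨ v = (u.1, u.2 + 1) ∨
      (v = (u.1 + 1, u.2) ∧ 1 ≤ u.1 + 1 + u.2 ∧ u.1 + 1 + u.2 ≤ (n : ℤ)))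

/-- Weights of the grid graph: matching/substitution edges have weight `0` iff
`x_{i+1} = y_{i+1+d}`; deletion and insertion edges have weight `1`. -/
def gridWt (n : ℕ) (x y : ℤ → Bool) (u v : ℤ × ℤ) : ℕ :=
  if v = (u.1 + 1, u.2) then (if x (u.1 + 1) = y (u.1 + 1 + u.2) then 0 else 1) else 1

lemma pathCost_cons {V : Type*} (wt : V → V → ℕ) (a b : V) (l : List V) :
    pathCost wt (a :: b :: l) = wt a b + pathCost wt (b :: l) := rfl
lemma isPath_cons {V : Type*} {E : V → V → Prop} {w z u : V} {l : List V}
    (h : IsPath E w z l) (he : E u w) : IsPath E u z (u :: l) := by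
  obtain ⟨h1, h2, h3⟩ := h
  match l, h1 with
  | w :: l', rfl =>
    refine ⟨rfl, ?_, List.isChain_cons_cons.2 ⟨he, h3⟩⟩
    simpa using h2
lemma isPath_pair {V : Type*} {E : V → V → Prop} {u z : V} (he : E u z) :
    IsPath E u z [u, z] := ⟨rfl, rfl, List.isChain_cons_cons.2 ⟨he, List.isChain_singleton z⟩⟩
lemma nxt_spec {S : Finset ℤ} {i : ℤ} (h : hasNext S i) :
    nxt S i ∈ S ∧ i < nxt S i ∧ ∀ s ∈ S, i < s → nxt S i ≤ s := by
  obtain ⟨s0, hs0, hls⟩ := h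
  have hne : (S.filter fun s => i < s).Nonempty := ⟨s0, Finset.mem_filter.2 ⟨hs0, hls⟩⟩
  have hmin : (S.filter fun s => i < s).min = (((S.filter fun s => i < s).min' hne : ℤ) : WithTop ℤ) :=
    (Finset.coe_min' hne).symm
  have hnxt : nxt S i = (S.filter fun s => i < s).min' hne := by
    rw [nxt, hmin]; rfl
  have hmem := Finset.min'_mem _ hne
  rw [Finset.mem_filter] at hmem
  refine ⟨by rw [hnxt]; exact hmem.1, by rw [hnxt]; exact hmem.2, ?_⟩
  intro s hs hls'
  rw [hnxt]
  exact Finset.min'_le _ _ (Finset.mem_filter.2 ⟨hs, hls'⟩)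
-- new stuff
variable {n t : ℕ} {x y : ℤ → Bool} {S : Finset ℤ}

lemma sampWt_ins (h : hasNext S r) (e : ℤ) :
    sampWt n t x y S (r, e) (r, e + 1) = 1 := by
  simp [sampWt, h]

lemma sampWt_vert (h : hasNext S r) (e : ℤ) :
    sampWt n t x y S (r, e) (nxt S r, e) =
      if 1 ≤ r + 1 + e ∧ r + 1 + e ≤ (n : ℤ) ∧ x (r + 1) = y (r + 1 + e) then 0 else 1 := by
  have hne : nxt S r ≠ r := by have := (nxt_spec h).2.1; omega
  simp only [sampWt, if_pos h, Prod.mk.injEq]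
  rw [if_neg (by rintro ⟨-, hh⟩; omega), if_pos trivial]

lemma sampWt_vert_le (h : hasNext S r) (e : ℤ) :
    sampWt n t x y S (r, e) (nxt S r, e) ≤ 1 := by
  rw [sampWt_vert h]; split <;> simp

lemma sampWt_del (h : hasNext S r) (e : ℤ) :
    sampWt n t x y S (r, e) (nxt S r, e - 1) = 1 := by
  have hne : nxt S r ≠ r := by have := (nxt_spec h).2.1; omega
  simp only [sampWt, if_pos h, Prod.mk.injEq]
  rw [if_neg (by rintro ⟨-, hh⟩; omega), if_neg (by rintro ⟨-, hh⟩; omega)]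

lemma sampWt_fin (h : ¬ hasNext S r) (e : ℤ) (v : ℤ × ℤ) :
    sampWt n t x y S (r, e) v = e.natAbs := by
  simp [sampWt, h]

lemma sampEdge_ins (hr : r ∈ S) (h : hasNext S r) (e : ℤ) (h1 : -(t:ℤ) ≤ e) (h2 : e + 1 ≤ t) :
    sampEdge n t S (r, e) (r, e + 1) :=
  ⟨hr, h1, by omega, Or.inl ⟨h, Or.inr (Or.inl ⟨rfl, h2⟩)⟩⟩

lemma sampEdge_vert (hr : r ∈ S) (h : hasNext S r) (e : ℤ) (h1 : -(t:ℤ) ≤ e) (h2 : e ≤ t) :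
    sampEdge n t S (r, e) (nxt S r, e) :=
  ⟨hr, h1, h2, Or.inl ⟨h, Or.inl rfl⟩⟩

lemma sampEdge_del (hr : r ∈ S) (h : hasNext S r) (e : ℤ) (h1 : -(t:ℤ) ≤ e - 1) (h2 : e ≤ t) :
    sampEdge n t S (r, e) (nxt S r, e - 1) :=
  ⟨hr, by omega, h2, Or.inl ⟨h, Or.inr (Or.inr ⟨rfl, h1⟩)⟩⟩

lemma sampEdge_fin (hr : r ∈ S) (h : ¬ hasNext S r) (e : ℤ) (h1 : -(t:ℤ) ≤ e) (h2 : e ≤ t) :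
    sampEdge n t S (r, e) ((n : ℤ), 0) :=
  ⟨hr, h1, h2, Or.inr ⟨h, rfl⟩⟩

/-- Climb with insertions from `(r, g - k)` to `(r, g)` then follow `P`. -/
lemma climb (hr : r ∈ S) (h : hasNext S r) {g : ℤ} (hg : g ≤ t) {P : List (ℤ × ℤ)}
    (hP : IsPath (sampEdge n t S) (r, g) ((n:ℤ), 0) P) :
    ∀ k : ℕ, ∀ e : ℤ, e + k = g → -(t:ℤ) ≤ e →
      ∃ Q, IsPath (sampEdge n t S) (r, e) ((n:ℤ), 0) Q ∧
        pathCost (sampWt n t x y S) Q ≤ pathCost (sampWt n t x y S) P + k := by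
  intro k
  induction k with
  | zero => intro e hek _; exact ⟨P, by simpa [show e = g by omega] using hP, by omega⟩
  | succ k ih =>
    intro e hek het
    obtain ⟨Q', hQ', hcQ'⟩ := ih (e + 1) (by omega) (by omega)
    refine ⟨(r, e) :: Q', isPath_cons hQ' (sampEdge_ins hr h e het (by omega)), ?_⟩
    obtain ⟨h1, -, -⟩ := hQ'
    match Q', h1 with
    | (a :: l'), h1 =>
      rw [pathCost_cons]
      have ha : a = (r, e+1) := by simpa using h1
      subst ha
      rw [sampWt_ins h]
      omega

/-- Any grid path to the sink costs at least `|d|`. -/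
lemma grid_tail (n : ℕ) (x y : ℤ → Bool) :
    ∀ l : List (ℤ × ℤ), ∀ u : ℤ × ℤ, IsPath (gridEdge n) u ((n:ℤ), 0) l →
      u.2.natAbs ≤ pathCost (gridWt n x y) l := by
  intro l
  induction l with
  | nil => intro u h; simp [IsPath] at h
  | cons a l ih =>
    intro u h
    obtain ⟨h1, h2, h3⟩ := h
    have hau : a = u := by simpa using h1
    subst hau
    match l with
    | [] =>
      simp at h2
      subst h2
      simp [pathCost]
    | b :: l' =>
      simp only [List.Chain', List.isChain_cons_cons] at h3
      have hb := ih b ⟨rfl, by simpa using h2, h3.2⟩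
      rw [pathCost_cons]
      obtain ⟨-, -, hcase⟩ := h3.1
      rcases hcase with hc | hc | hc
      · have hb2 : b.2 = a.2 - 1 := by rw [hc]
        have hw : gridWt n x y a b = 1 := by
          rw [gridWt, if_neg (by rw [hc]; simp [Prod.ext_iff])]
        omega
      · have hb2 : b.2 = a.2 + 1 := by rw [hc]
        have hw : gridWt n x y a b = 1 := by
          rw [gridWt, if_neg (by rw [hc]; simp [Prod.ext_iff])]
        omega
      · have hb2 : b.2 = a.2 := by rw [hc.1]
        omega

lemma pathCost_cons_head {V : Type*} {wt : V → V → ℕ} {a w : V} {l : List V}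
    (h : l.head? = some w) : pathCost wt (a :: l) = wt a w + pathCost wt l := by
  match l with
  | w' :: l' =>
    obtain rfl : w' = w := by simpa using h
    rfl
/-- From base path `P` at diagonal `δ'` plus the inductive bounds at `nxt S r`,
build paths from `(r, e)` for every `e ∈ [-t, t]`. -/
lemma buildAll (hr : r ∈ S) (hnx : hasNext S r) {δ δ' d b2 : ℤ} {costv W : ℕ}
    (hδ'1 : -(t:ℤ) ≤ δ') (hδ'2 : δ' ≤ t)
    (H : ∀ e : ℤ, -(t:ℤ) ≤ e → e ≤ t → ∃ lS, IsPath (sampEdge n t S) (nxt S r, e) ((n:ℤ),0) lS ∧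
        pathCost (sampWt n t x y S) lS + (δ - b2).natAbs ≤ costv + (e - δ).natAbs)
    {P : List (ℤ × ℤ)} (hP : IsPath (sampEdge n t S) (r, δ') ((n:ℤ),0) P)
    (hPc : pathCost (sampWt n t x y S) P + (δ' - d).natAbs ≤ W + costv)
    (harith : ∀ e : ℤ, δ' < e → e ≤ t →
      1 + (δ' - d).natAbs + (e - 1 - δ).natAbs ≤ W + (e - δ').natAbs + (δ - b2).natAbs) :
    ∀ e : ℤ, -(t:ℤ) ≤ e → e ≤ t → ∃ lS, IsPath (sampEdge n t S) (r, e) ((n:ℤ),0) lS ∧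
        pathCost (sampWt n t x y S) lS + (δ' - d).natAbs ≤ W + costv + (e - δ').natAbs := by
  intro e he1 he2
  rcases lt_trichotomy e δ' with hlt | heq | hgt
  · obtain ⟨Q, hQ, hQc⟩ := climb (x := x) (y := y) hr hnx hδ'2 hP (δ' - e).toNat e (by omega) he1
    exact ⟨Q, hQ, by omega⟩
  · subst heq
    exact ⟨P, hP, by omega⟩
  · obtain ⟨lS', hlS', hc'⟩ := H (e - 1) (by omega) (by omega)
    refine ⟨(r, e) :: lS', isPath_cons hlS' (sampEdge_del hr hnx e (by omega) he2), ?_⟩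
    rw [pathCost_cons_head hlS'.1, sampWt_del hnx]
    have := harith e hgt he2
    omega

lemma main (n t : ℕ) (x y : ℤ → Bool) (S : Finset ℤ)
    (hSsub : ∀ s ∈ S, 0 ≤ s ∧ s ≤ (n : ℤ)) :
    ∀ l : List (ℤ × ℤ), ∀ u : ℤ × ℤ, ∀ r : ℤ,
      IsPath (gridEdge n) u ((n:ℤ), 0) l →
      (∀ v ∈ l, -(t : ℤ) ≤ v.2 ∧ v.2 ≤ (t : ℤ)) →
      r ∈ S → u.1 ≤ r → (∀ s ∈ S, u.1 ≤ s → r ≤ s) →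
      ∃ δ : ℤ, -(t:ℤ) ≤ δ ∧ δ ≤ t ∧ ∀ e : ℤ, -(t:ℤ) ≤ e → e ≤ t →
        ∃ lS, IsPath (sampEdge n t S) (r, e) ((n:ℤ), 0) lS ∧
          pathCost (sampWt n t x y S) lS + (δ - u.2).natAbs ≤
            pathCost (gridWt n x y) l + (e - δ).natAbs := by
  intro l
  induction l with
  | nil => intro u r h; simp [IsPath] at h
  | cons a l ih =>
    intro u r hpath hband hrS hur hrmin
    obtain ⟨h1, h2, h3⟩ := hpath
    obtain rfl : a = u := by simpa using h1
    have hat : -(t:ℤ) ≤ a.2 ∧ a.2 ≤ t := hband a (by simp)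
    cases l with
    | nil =>
      simp at h2
      subst h2
      have hrn : r = (n : ℤ) := le_antisymm (hSsub r hrS).2 hur
      subst hrn
      have hnn : ¬ hasNext S ((n:ℤ)) := by
        rintro ⟨s, hs, hlt⟩
        exact absurd (hSsub s hs).2 (by omega)
      refine ⟨0, by omega, by omega, fun e he1 he2 => ?_⟩
      refine ⟨[((n:ℤ), e), ((n:ℤ), 0)], isPath_pair (sampEdge_fin hrS hnn e he1 he2), ?_⟩
      have hpc : pathCost (sampWt n t x y S) [((n:ℤ), e), ((n:ℤ),0)] = e.natAbs := by
        rw [pathCost_cons, sampWt_fin hnn]; rfl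
      rw [hpc]
      simp [pathCost]
    | cons b rest =>
      simp only [List.Chain', List.isChain_cons_cons] at h3
      have hab := h3.1
      have hpb : IsPath (gridEdge n) b ((n:ℤ),0) (b :: rest) := ⟨rfl, by simpa using h2, h3.2⟩
      have hbandb : ∀ v ∈ b :: rest, -(t:ℤ) ≤ v.2 ∧ v.2 ≤ t := fun v hv => hband v (by simp [hv])
      have hbt : -(t:ℤ) ≤ b.2 ∧ b.2 ≤ t := hbandb b (by simp)
      obtain ⟨-, -, hcase⟩ := hab
      have hcost : pathCost (gridWt n x y) (a :: b :: rest) = gridWt n x y a b + pathCost (gridWt n x y) (b :: rest) := rfl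
      rcases hcase with hc | hc | hc
      · -- grid deletion edge : b = (a.1 + 1, a.2 - 1)
        have hwt : gridWt n x y a b = 1 := by
          rw [gridWt, if_neg (by rw [hc]; simp [Prod.ext_iff])]
        by_cases haS : a.1 ∈ S
        · have hra : r = a.1 := le_antisymm (hrmin a.1 haS le_rfl) hur
          by_cases hnx : hasNext S r
          · obtain ⟨hn1, hn2, hn3⟩ := nxt_spec hnx
            obtain ⟨δ, hδ1, hδ2, H⟩ := ih b (nxt S r) hpb hbandb hn1
              (by rw [hc]; simp; omega) (fun s hs hle => hn3 s hs (by rw [hc] at hle; simp at hle; omega))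
            have hb2 : b.2 = a.2 - 1 := by rw [hc]
            -- base path at δ' := min (δ+1) t
            by_cases hcap : δ + 1 ≤ t
            · -- δ' = δ + 1
              obtain ⟨lS', hlS', hc'⟩ := H δ hδ1 hδ2
              have hP : IsPath (sampEdge n t S) (r, δ + 1) ((n:ℤ),0) ((r, δ+1) :: lS') := by
                refine isPath_cons hlS' ?_
                have := sampEdge_del (n := n) (t := t) hrS hnx (δ+1) (by omega) (by omega)
                simpa using this
              have hPc : pathCost (sampWt n t x y S) ((r, δ+1) :: lS') + (δ + 1 - a.2).natAbs
                  ≤ 1 + (pathCost (gridWt n x y) (b :: rest)) := by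
                rw [pathCost_cons_head hlS'.1]
                have hw : sampWt n t x y S (r, δ+1) (nxt S r, δ) = 1 := by
                  have := sampWt_del (n := n) (t := t) (x := x) (y := y) hnx (δ+1)
                  simpa using this
                rw [hw]
                omega
              have hall := buildAll hrS hnx (δ := δ) (δ' := δ+1) (d := a.2) (b2 := b.2)
                (by omega) (by omega) H hP hPc (fun e h1 h2 => by omega)
              exact ⟨δ + 1, by omega, by omega, fun e he1 he2 => by
                obtain ⟨lS, hp, hcb⟩ := hall e he1 he2
                exact ⟨lS, hp, by rw [hcost, hwt]; omega⟩⟩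
            · -- δ = t, δ' = t
              have hδt : δ = t := by omega
              subst hδt
              obtain ⟨lS', hlS', hc'⟩ := H (t:ℤ) (by omega) le_rfl
              have hP : IsPath (sampEdge n t S) (r, (t:ℤ)) ((n:ℤ),0) ((r, (t:ℤ)) :: lS') :=
                isPath_cons hlS' (sampEdge_vert hrS hnx _ (by omega) le_rfl)
              have hPc : pathCost (sampWt n t x y S) ((r, (t:ℤ)) :: lS') + ((t:ℤ) - a.2).natAbs
                  ≤ 1 + (pathCost (gridWt n x y) (b :: rest)) := by
                rw [pathCost_cons_head hlS'.1]
                have hw := sampWt_vert_le (n := n) (t := t) (x := x) (y := y) hnx (t:ℤ)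
                omega
              have hall := buildAll hrS hnx (δ := (t:ℤ)) (δ' := (t:ℤ)) (d := a.2) (b2 := b.2)
                (by omega) le_rfl H hP hPc (fun e h1 h2 => by omega)
              exact ⟨(t:ℤ), by omega, le_rfl, fun e he1 he2 => by
                obtain ⟨lS, hp, hcb⟩ := hall e he1 he2
                exact ⟨lS, hp, by rw [hcost, hwt]; omega⟩⟩
          · -- tail regime
            have htl : b.2.natAbs ≤ (pathCost (gridWt n x y) (b :: rest)) := grid_tail n x y _ b hpb
            refine ⟨a.2, hat.1, hat.2, fun e he1 he2 => ?_⟩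
            refine ⟨[(r, e), ((n:ℤ), 0)], isPath_pair (sampEdge_fin hrS hnx e he1 he2), ?_⟩
            have : pathCost (sampWt n t x y S) [(r, e), ((n:ℤ),0)] = e.natAbs := by
              rw [pathCost_cons, sampWt_fin hnx]; rfl
            rw [this, hcost, hwt]
            have hb2 : b.2 = a.2 - 1 := by rw [hc]
            omega
        · -- a.1 ∉ S : r serves for b as well
          obtain ⟨δ, hδ1, hδ2, H⟩ := ih b r hpb hbandb hrS
            (by rw [hc]; simp; rcases lt_or_eq_of_le hur with h | h; omega
                exact absurd (h ▸ hrS) haS)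
            (fun s hs hle => hrmin s hs (by rw [hc] at hle; simp at hle; omega))
          refine ⟨δ, hδ1, hδ2, fun e he1 he2 => ?_⟩
          obtain ⟨lS, hp, hcb⟩ := H e he1 he2
          have hb2 : b.2 = a.2 - 1 := by rw [hc]
          exact ⟨lS, hp, by rw [hcost, hwt]; omega⟩
      · -- grid insertion edge : b = (a.1, a.2 + 1)
        have hwt : gridWt n x y a b = 1 := by
          rw [gridWt, if_neg (by rw [hc]; simp [Prod.ext_iff])]
        obtain ⟨δ, hδ1, hδ2, H⟩ := ih b r hpb hbandb hrS (by rw [hc]; simpa using hur)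
          (fun s hs hle => hrmin s hs (by rw [hc] at hle; simpa using hle))
        refine ⟨δ, hδ1, hδ2, fun e he1 he2 => ?_⟩
        obtain ⟨lS, hp, hcb⟩ := H e he1 he2
        have hb2 : b.2 = a.2 + 1 := by rw [hc]
        exact ⟨lS, hp, by rw [hcost, hwt]; omega⟩
      · -- grid matching edge : b = (a.1 + 1, a.2), range condition
        obtain ⟨hcb, hr1, hr2⟩ := hc
        by_cases haS : a.1 ∈ S
        · have hra : r = a.1 := le_antisymm (hrmin a.1 haS le_rfl) hur
          by_cases hnx : hasNext S r
          · obtain ⟨hn1, hn2, hn3⟩ := nxt_spec hnx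
            obtain ⟨δ, hδ1, hδ2, H⟩ := ih b (nxt S r) hpb hbandb hn1
              (by rw [hcb]; simp; omega) (fun s hs hle => hn3 s hs (by rw [hcb] at hle; simp at hle; omega))
            have hb2 : b.2 = a.2 := by rw [hcb]
            have hmw : sampWt n t x y S (r, a.2) (nxt S r, a.2) = gridWt n x y a b := by
              rw [sampWt_vert hnx, gridWt, if_pos hcb, hra]
              by_cases hxy : x (a.1 + 1) = y (a.1 + 1 + a.2)
              · rw [if_pos ⟨hr1, hr2, hxy⟩, if_pos hxy]
              · rw [if_neg (by tauto), if_neg hxy]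
            by_cases hca : a.2 ≤ δ
            · -- δ' = a.2, vertical base edge
              obtain ⟨lS', hlS', hc'⟩ := H a.2 hat.1 hat.2
              have hP : IsPath (sampEdge n t S) (r, a.2) ((n:ℤ),0) ((r, a.2) :: lS') :=
                isPath_cons hlS' (sampEdge_vert hrS hnx _ hat.1 hat.2)
              have hPc : pathCost (sampWt n t x y S) ((r, a.2) :: lS') + (a.2 - a.2).natAbs
                  ≤ gridWt n x y a b + (pathCost (gridWt n x y) (b :: rest)) := by
                rw [pathCost_cons_head hlS'.1, hmw]
                omega
              have hall := buildAll hrS hnx (δ := δ) (δ' := a.2) (d := a.2) (b2 := b.2)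
                hat.1 hat.2 H hP hPc (fun e h1 h2 => by omega)
              exact ⟨a.2, hat.1, hat.2, fun e he1 he2 => by
                obtain ⟨lS, hp, hcb'⟩ := hall e he1 he2
                exact ⟨lS, hp, by rw [hcost]; omega⟩⟩
            · -- δ < a.2, δ' = δ + 1, deletion base edge
              obtain ⟨lS', hlS', hc'⟩ := H δ hδ1 hδ2
              have hP : IsPath (sampEdge n t S) (r, δ + 1) ((n:ℤ),0) ((r, δ+1) :: lS') := by
                refine isPath_cons hlS' ?_
                have := sampEdge_del (n := n) (t := t) hrS hnx (δ+1) (by omega) (by omega)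
                simpa using this
              have hPc : pathCost (sampWt n t x y S) ((r, δ+1) :: lS') + (δ + 1 - a.2).natAbs
                  ≤ gridWt n x y a b + (pathCost (gridWt n x y) (b :: rest)) := by
                rw [pathCost_cons_head hlS'.1]
                have hw : sampWt n t x y S (r, δ+1) (nxt S r, δ) = 1 := by
                  have := sampWt_del (n := n) (t := t) (x := x) (y := y) hnx (δ+1)
                  simpa using this
                rw [hw]
                omega
              have hall := buildAll hrS hnx (δ := δ) (δ' := δ+1) (d := a.2) (b2 := b.2)
                (by omega) (by omega) H hP hPc (fun e h1 h2 => by omega)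
              exact ⟨δ+1, by omega, by omega, fun e he1 he2 => by
                obtain ⟨lS, hp, hcb'⟩ := hall e he1 he2
                exact ⟨lS, hp, by rw [hcost]; omega⟩⟩
          · -- tail regime
            have htl : b.2.natAbs ≤ (pathCost (gridWt n x y) (b :: rest)) := grid_tail n x y _ b hpb
            refine ⟨a.2, hat.1, hat.2, fun e he1 he2 => ?_⟩
            refine ⟨[(r, e), ((n:ℤ), 0)], isPath_pair (sampEdge_fin hrS hnx e he1 he2), ?_⟩
            have hpc : pathCost (sampWt n t x y S) [(r, e), ((n:ℤ),0)] = e.natAbs := by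
              rw [pathCost_cons, sampWt_fin hnx]; rfl
            rw [hpc, hcost]
            have hb2 : b.2 = a.2 := by rw [hcb]
            omega
        · obtain ⟨δ, hδ1, hδ2, H⟩ := ih b r hpb hbandb hrS
            (by rw [hcb]; simp; rcases lt_or_eq_of_le hur with h | h; omega
                exact absurd (h ▸ hrS) haS)
            (fun s hs hle => hrmin s hs (by rw [hcb] at hle; simp at hle; omega))
          refine ⟨δ, hδ1, hδ2, fun e he1 he2 => ?_⟩
          obtain ⟨lS, hp, hcb'⟩ := H e he1 he2
          have hb2 : b.2 = a.2 := by rw [hcb]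
          exact ⟨lS, hp, by rw [hcost]; omega⟩
lemma strList_eq (n : ℕ) (x : ℤ → Bool) :
    strList n x = (List.range n).map (fun k : ℕ => x ((k : ℤ) + 1)) := by
  rw [strList]
  have haux : ∀ l : List ℕ, (l.flatMap fun a => [((a : ℕ) : ℤ)]) = l.map (fun a : ℕ => (a : ℤ)) := by
    intro l; induction l with
    | nil => rfl
    | cons h t ih => simp [ih]
  have h2 : (do let a ← List.range n; pure ((a : ℕ) : ℤ)) = (List.range n).map (fun a : ℕ => (a : ℤ)) :=
    haux (List.range n)
  rw [h2, List.map_map]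
  rfl

lemma strList_length (n : ℕ) (x : ℤ → Bool) : (strList n x).length = n := by
  rw [strList_eq, List.length_map, List.length_range]

lemma strList_drop {n : ℕ} (x : ℤ → Bool) {p : ℕ} (hp : p < n) :
    (strList n x).drop p = x ((p : ℤ) + 1) :: (strList n x).drop (p + 1) := by
  rw [List.drop_eq_getElem_cons (by rw [strList_length]; exact hp)]
  congr 1
  simp only [strList_eq, List.getElem_map, List.getElem_range]


lemma gridVertex_mk {n : ℕ} {a b : ℤ} (h1 : 0 ≤ a) (h2 : a ≤ (n:ℤ)) (h3 : -(n:ℤ) ≤ b)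
    (h4 : b ≤ (n:ℤ)) : gridVertex n (a, b) := ⟨h1, h2, h3, h4⟩

lemma gridEdge_del {n : ℕ} {a b c d : ℤ} (hu : gridVertex n (a, b)) (hv : gridVertex n (c, d))
    (h1 : c = a + 1) (h2 : d = b - 1) : gridEdge n (a, b) (c, d) :=
  ⟨hu, hv, Or.inl (Prod.ext_iff.2 ⟨h1, h2⟩)⟩

lemma gridEdge_ins {n : ℕ} {a b c d : ℤ} (hu : gridVertex n (a, b)) (hv : gridVertex n (c, d))
    (h1 : c = a) (h2 : d = b + 1) : gridEdge n (a, b) (c, d) :=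
  ⟨hu, hv, Or.inr (Or.inl (Prod.ext_iff.2 ⟨h1, h2⟩))⟩

lemma gridEdge_mat {n : ℕ} {a b c d : ℤ} (hu : gridVertex n (a, b)) (hv : gridVertex n (c, d))
    (h1 : c = a + 1) (h2 : d = b) (hr1 : 1 ≤ a + 1 + b) (hr2 : a + 1 + b ≤ (n:ℤ)) :
    gridEdge n (a, b) (c, d) :=
  ⟨hu, hv, Or.inr (Or.inr ⟨Prod.ext_iff.2 ⟨h1, h2⟩, hr1, hr2⟩)⟩

lemma gridWt_ne {n : ℕ} {x y : ℤ → Bool} {u v : ℤ × ℤ} (h : v.2 ≠ u.2 ∨ v.1 ≠ u.1 + 1) :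
    gridWt n x y u v = 1 := by
  rw [gridWt, if_neg]
  rw [Prod.ext_iff]
  tauto

lemma gridWt_mat {n : ℕ} {x y : ℤ → Bool} {a b c d : ℤ} (h1 : c = a + 1) (h2 : d = b) :
    gridWt n x y (a, b) (c, d) = if x (a + 1) = y (a + 1 + b) then 0 else 1 := by
  rw [gridWt, if_pos (Prod.ext_iff.2 ⟨h1, h2⟩)]

lemma gridOfLev (n : ℕ) (x y : ℤ → Bool) :
    ∀ k p q : ℕ, (n - p) + (n - q) ≤ k → p ≤ n → q ≤ n →
      ∃ l : List (ℤ × ℤ), IsPath (gridEdge n) ((p : ℤ), (q : ℤ) - (p : ℤ)) ((n : ℤ), 0) l ∧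
        pathCost (gridWt n x y) l =
          levenshtein Levenshtein.defaultCost ((strList n x).drop p) ((strList n y).drop q) ∧
        ∀ v ∈ l, v.2.natAbs ≤ ((q : ℤ) - (p : ℤ)).natAbs + pathCost (gridWt n x y) l := by
  intro k
  induction k with
  | zero =>
    intro p q hk hp hq
    have hp' : p = n := by omega
    have hq' : q = n := by omega
    subst p; subst q
    refine ⟨[((n : ℤ), (n : ℤ) - (n : ℤ))], ⟨rfl, by simp, List.isChain_singleton _⟩, ?_, ?_⟩
    · rw [List.drop_of_length_le (strList_length n x).le,
        List.drop_of_length_le (strList_length n y).le]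
      simp [pathCost, levenshtein]
    · intro v hv; simp at hv; subst hv; simp
  | succ k ihk =>
    intro p q hk hp hq
    rcases eq_or_lt_of_le hp with hpn | hpn
    · subst p
      rcases eq_or_lt_of_le hq with hqn | hqn
      · subst q
        exact ihk n n (by omega) le_rfl le_rfl
      · -- insertion (x side exhausted)
        obtain ⟨l', hl', hcost', hband'⟩ := ihk n (q + 1) (by omega) le_rfl (by omega)
        have hw : gridWt n x y ((n : ℤ), (q : ℤ) - (n : ℤ)) ((n : ℤ), ((q+1:ℕ):ℤ) - (n:ℤ)) = 1 :=
          gridWt_ne (Or.inr (by simp))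
        refine ⟨((n : ℤ), (q : ℤ) - (n : ℤ)) :: l', isPath_cons hl' ?_, ?_, ?_⟩
        · exact gridEdge_ins (gridVertex_mk (by omega) le_rfl (by omega) (by omega))
            (gridVertex_mk (by omega) le_rfl (by push_cast; omega) (by push_cast; omega))
            rfl (by push_cast; ring)
        · rw [pathCost_cons_head hl'.1, hcost',
            List.drop_of_length_le (strList_length n x).le, strList_drop y hqn,
            levenshtein_nil_cons, hw]
          simp [Levenshtein.defaultCost]
        · intro v hv
          rcases List.mem_cons.1 hv with rfl | hv'
          · simp only [pathCost_cons_head hl'.1]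
            omega
          · have := hband' v hv'
            rw [pathCost_cons_head hl'.1, hw]
            push_cast at this ⊢
            omega
    · rcases eq_or_lt_of_le hq with hqn | hqn
      · subst q
        -- deletion (y side exhausted)
        obtain ⟨l', hl', hcost', hband'⟩ := ihk (p + 1) n (by omega) (by omega) le_rfl
        have hw : gridWt n x y ((p : ℤ), (n : ℤ) - (p : ℤ)) (((p+1:ℕ):ℤ), (n : ℤ) - ((p+1:ℕ):ℤ)) = 1 :=
          gridWt_ne (Or.inl (by push_cast; omega))
        refine ⟨((p : ℤ), (n : ℤ) - (p : ℤ)) :: l', isPath_cons hl' ?_, ?_, ?_⟩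
        · exact gridEdge_del (gridVertex_mk (by omega) (by omega) (by omega) (by omega))
            (gridVertex_mk (by push_cast; omega) (by push_cast; omega) (by push_cast; omega)
              (by push_cast; omega))
            (by push_cast; ring) (by push_cast; ring)
        · rw [pathCost_cons_head hl'.1, hcost',
            List.drop_of_length_le (strList_length n y).le, strList_drop x hpn,
            levenshtein_cons_nil, hw]
          simp [Levenshtein.defaultCost]
        · intro v hv
          rcases List.mem_cons.1 hv with rfl | hv'
          · simp only [pathCost_cons_head hl'.1]
            omega
          · have := hband' v hv'
            rw [pathCost_cons_head hl'.1, hw]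
            push_cast at this ⊢
            omega
      · -- generic step
        have hlev : levenshtein Levenshtein.defaultCost ((strList n x).drop p) ((strList n y).drop q)
            = min (1 + levenshtein Levenshtein.defaultCost ((strList n x).drop (p+1)) ((strList n y).drop q))
              (min (1 + levenshtein Levenshtein.defaultCost ((strList n x).drop p) ((strList n y).drop (q+1)))
                ((if x ((p:ℤ)+1) = y ((q:ℤ)+1) then 0 else 1) +
                  levenshtein Levenshtein.defaultCost ((strList n x).drop (p+1)) ((strList n y).drop (q+1)))) := by
          rw [strList_drop x hpn, strList_drop y hqn, levenshtein_cons_cons,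
            ← strList_drop x hpn, ← strList_drop y hqn]
          simp [Levenshtein.defaultCost]
        rcases le_total
            (1 + levenshtein Levenshtein.defaultCost ((strList n x).drop (p+1)) ((strList n y).drop q))
            (min (1 + levenshtein Levenshtein.defaultCost ((strList n x).drop p) ((strList n y).drop (q+1)))
              ((if x ((p:ℤ)+1) = y ((q:ℤ)+1) then 0 else 1) +
                levenshtein Levenshtein.defaultCost ((strList n x).drop (p+1)) ((strList n y).drop (q+1))))
          with hm1 | hm1
        · -- deletion edge is optimal
          rw [min_eq_left hm1] at hlev
          obtain ⟨l', hl', hcost', hband'⟩ := ihk (p + 1) q (by omega) (by omega) (by omega)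
          have hw : gridWt n x y ((p : ℤ), (q : ℤ) - (p : ℤ)) (((p+1:ℕ):ℤ), (q : ℤ) - ((p+1:ℕ):ℤ)) = 1 :=
            gridWt_ne (Or.inl (by push_cast; omega))
          refine ⟨((p : ℤ), (q : ℤ) - (p : ℤ)) :: l', isPath_cons hl' ?_, ?_, ?_⟩
          · exact gridEdge_del (gridVertex_mk (by omega) (by omega) (by omega) (by omega))
              (gridVertex_mk (by push_cast; omega) (by push_cast; omega) (by push_cast; omega)
                (by push_cast; omega))
              (by push_cast; ring) (by push_cast; ring)
          · rw [pathCost_cons_head hl'.1, hcost', hlev, hw]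
          · intro v hv
            rcases List.mem_cons.1 hv with rfl | hv'
            · simp only [pathCost_cons_head hl'.1]
              omega
            · have := hband' v hv'
              rw [pathCost_cons_head hl'.1, hw]
              push_cast at this ⊢
              omega
        · rw [min_eq_right hm1] at hlev
          rcases le_total
              (1 + levenshtein Levenshtein.defaultCost ((strList n x).drop p) ((strList n y).drop (q+1)))
              ((if x ((p:ℤ)+1) = y ((q:ℤ)+1) then 0 else 1) +
                levenshtein Levenshtein.defaultCost ((strList n x).drop (p+1)) ((strList n y).drop (q+1)))
            with hm2 | hm2
          · -- insertion edge is optimal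
            rw [min_eq_left hm2] at hlev
            obtain ⟨l', hl', hcost', hband'⟩ := ihk p (q + 1) (by omega) (by omega) (by omega)
            have hw : gridWt n x y ((p : ℤ), (q : ℤ) - (p : ℤ)) ((p:ℤ), ((q+1:ℕ):ℤ) - (p:ℤ)) = 1 :=
              gridWt_ne (Or.inr (by simp))
            refine ⟨((p : ℤ), (q : ℤ) - (p : ℤ)) :: l', isPath_cons hl' ?_, ?_, ?_⟩
            · exact gridEdge_ins (gridVertex_mk (by omega) (by omega) (by omega) (by omega))
                (gridVertex_mk (by push_cast; omega) (by push_cast; omega) (by push_cast; omega)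
                  (by push_cast; omega))
                rfl (by push_cast; ring)
            · rw [pathCost_cons_head hl'.1, hcost', hlev, hw]
            · intro v hv
              rcases List.mem_cons.1 hv with rfl | hv'
              · simp only [pathCost_cons_head hl'.1]
                omega
              · have := hband' v hv'
                rw [pathCost_cons_head hl'.1, hw]
                push_cast at this ⊢
                omega
          · -- matching edge is optimal
            rw [min_eq_right hm2] at hlev
            obtain ⟨l', hl', hcost', hband'⟩ := ihk (p + 1) (q + 1) (by omega) (by omega) (by omega)
            have hw : gridWt n x y ((p : ℤ), (q : ℤ) - (p : ℤ)) (((p+1:ℕ):ℤ), ((q+1:ℕ):ℤ) - ((p+1:ℕ):ℤ))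
                = if x ((p:ℤ)+1) = y ((q:ℤ)+1) then 0 else 1 := by
              rw [gridWt_mat (by push_cast; ring) (by push_cast; ring)]
              have hidx : (p:ℤ) + 1 + ((q:ℤ) - (p:ℤ)) = (q:ℤ) + 1 := by ring
              rw [hidx]
            refine ⟨((p : ℤ), (q : ℤ) - (p : ℤ)) :: l', isPath_cons hl' ?_, ?_, ?_⟩
            · exact gridEdge_mat (gridVertex_mk (by omega) (by omega) (by omega) (by omega))
                (gridVertex_mk (by push_cast; omega) (by push_cast; omega) (by push_cast; omega)
                  (by push_cast; omega))
                (by push_cast; ring) (by push_cast; ring) (by omega) (by omega)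
            · rw [pathCost_cons_head hl'.1, hcost', hlev, hw]
            · intro v hv
              rcases List.mem_cons.1 hv with rfl | hv'
              · simp only [pathCost_cons_head hl'.1]
                omega
              · have := hband' v hv'
                rw [pathCost_cons_head hl'.1]
                have hwle : gridWt n x y ((p : ℤ), (q : ℤ) - (p : ℤ))
                    (((p+1:ℕ):ℤ), ((q+1:ℕ):ℤ) - ((p+1:ℕ):ℤ)) ≥ 0 := Nat.zero_le _
                push_cast at this ⊢
                omega

theorem stmt12 (n t : ℕ) (ht : 1 ≤ t) (hsqrt : (t : ℝ) ≤ Real.sqrt n)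
    (x y : ℤ → Bool) (S : Finset ℤ) (hS0 : (0 : ℤ) ∈ S)
    (hSsub : ∀ s ∈ S, 0 ≤ s ∧ s ≤ (n : ℤ)) :
    (∀ l : List (ℤ × ℤ), IsPath (gridEdge n) (0, 0) ((n : ℤ), 0) l →
      (∀ v ∈ l, -(t : ℤ) ≤ v.2 ∧ v.2 ≤ (t : ℤ)) →
      ∃ lS : List (ℤ × ℤ), IsPath (sampEdge n t S) (0, 0) ((n : ℤ), 0) lS ∧
        pathCost (sampWt n t x y S) lS ≤ pathCost (gridWt n x y) l) ∧
    (editDist n x y ≤ t → opt n t x y S ≤ editDist n x y) := by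
  have part1 : ∀ l : List (ℤ × ℤ), IsPath (gridEdge n) (0, 0) ((n : ℤ), 0) l →
      (∀ v ∈ l, -(t : ℤ) ≤ v.2 ∧ v.2 ≤ (t : ℤ)) →
      ∃ lS : List (ℤ × ℤ), IsPath (sampEdge n t S) (0, 0) ((n : ℤ), 0) lS ∧
        pathCost (sampWt n t x y S) lS ≤ pathCost (gridWt n x y) l := by
    intro l hp hb
    obtain ⟨δ, hδ1, hδ2, H⟩ := main n t x y S hSsub l (0, 0) 0 hp hb hS0 le_rfl
      (fun s hs _ => (hSsub s hs).1)
    obtain ⟨lS, hps, hc⟩ := H 0 (by omega) (by omega)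
    have hc' : pathCost (sampWt n t x y S) lS + (δ - 0).natAbs ≤
        pathCost (gridWt n x y) l + (0 - δ).natAbs := hc
    exact ⟨lS, hps, by omega⟩
  refine ⟨part1, fun hle => ?_⟩
  obtain ⟨l, hpl, hcl, hbl⟩ := gridOfLev n x y (n + n) 0 0 (by omega) (Nat.zero_le n) (Nat.zero_le n)
  have hpl' : IsPath (gridEdge n) (0, 0) ((n : ℤ), 0) l := by
    have h00 : (((0:ℕ) : ℤ), ((0:ℕ) : ℤ) - ((0:ℕ) : ℤ)) = ((0 : ℤ), (0 : ℤ)) := by norm_num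
    rwa [h00] at hpl
  have hcl' : pathCost (gridWt n x y) l = editDist n x y := by
    rw [hcl, List.drop_zero, List.drop_zero, editDist]
  have hband : ∀ v ∈ l, -(t : ℤ) ≤ v.2 ∧ v.2 ≤ (t : ℤ) := by
    intro v hv
    have h := hbl v hv
    rw [hcl'] at h
    constructor <;> omega
  obtain ⟨lS, hpS, hcS⟩ := part1 l hpl' hband
  have hopt : opt n t x y S ≤ pathCost (sampWt n t x y S) lS :=
    Nat.sInf_le ⟨lS, hpS, rfl⟩
  omega

end Stmt12
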